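/- arXiv:1303.1943 — 2 statements merged into one kernel-verified Lean document; each statement's English description precedes it below -/
import Mathlib

section
/- For every continuously differentiable function φ : ℝ → ℝ with compact support and every a ∈ ℝ, lim_{R→∞} ∫_{-∞}^{∞} (1/π) · sin(R(x-a))/(x-a) · φ(x) dx = φ(a). -/
open MeasureTheory Filter Real Complex FourierTransform


set_option maxHeartbeats 2000000 in
lemma rl_sin (g : ℝ → ℂ) (hg : Integrable g) (a : ℝ) :
    Tendsto (fun R : ℝ => ∫ x : ℝ, (Real.sin (R * (x - a)) : ℂ) * g x) atTop (nhds 0) := by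
  have h2pi : (0:ℝ) < 2 * π := by positivity
  have hint : ∀ c : ℝ, Integrable (fun x : ℝ => cexp ((c * x : ℝ) * I) * g x) := by
    intro c
    exact hg.bdd_mul (Complex.continuous_exp.comp (by continuity)).aestronglyMeasurable
      (c := 1) (ae_of_all _ fun x => by simp [Complex.norm_exp])
  have e1 : ∀ R : ℝ, (∫ x : ℝ, cexp ((-(R * x) : ℝ) * I) * g x) = 𝓕 g (R / (2 * π)) := by
    intro R
    rw [Real.fourier_real_eq_integral_exp_smul]
    congr 1; ext x
    rw [smul_eq_mul]
    congr 2
    push_cast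
    rw [show (-2 : ℂ) * π * x * (R / (2 * π)) = -(R * x) * ((2*π)/(2*π) : ℝ) by push_cast; ring]
    norm_num [ne_of_gt h2pi]
  have e2 : ∀ R : ℝ, (∫ x : ℝ, cexp ((R * x : ℝ) * I) * g x) = 𝓕 g (-(R / (2 * π))) := by
    intro R
    have := e1 (-R)
    simpa [neg_mul, neg_neg, neg_div] using this
  have key : ∀ R : ℝ, (∫ x : ℝ, (Real.sin (R * (x - a)) : ℂ) * g x)
      = (cexp ((R*a : ℝ) * I) * 𝓕 g (R / (2*π))
         - cexp ((-(R*a) : ℝ) * I) * 𝓕 g (-(R / (2*π)))) * I / 2 := by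
    intro R
    have hx : ∀ x : ℝ, (Real.sin (R * (x - a)) : ℂ) * g x
        = (cexp ((R*a : ℝ) * I) * (cexp ((-(R*x) : ℝ) * I) * g x)
           - cexp ((-(R*a) : ℝ) * I) * (cexp ((R*x : ℝ) * I) * g x)) * I / 2 := by
      intro x
      have h1 : cexp ((R*a :ℝ)*I) * cexp ((-(R*x):ℝ)*I) = cexp ((-(R*(x-a)):ℝ)*I) := by
        rw [← Complex.exp_add]; congr 1; push_cast; ring
      have h2 : cexp ((-(R*a):ℝ)*I) * cexp ((R*x:ℝ)*I) = cexp ((R*(x-a):ℝ)*I) := by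
        rw [← Complex.exp_add]; congr 1; push_cast; ring
      rw [show cexp ((R*a :ℝ)*I) * (cexp ((-(R*x):ℝ)*I) * g x)
            - cexp ((-(R*a):ℝ)*I) * (cexp ((R*x:ℝ)*I) * g x)
          = (cexp ((R*a :ℝ)*I) * cexp ((-(R*x):ℝ)*I)) * g x
            - (cexp ((-(R*a):ℝ)*I) * cexp ((R*x:ℝ)*I)) * g x from by ring, h1, h2,
        Complex.exp_mul_I, Complex.exp_mul_I]
      push_cast
      rw [Complex.sin_neg, Complex.cos_neg]
      linear_combination (Complex.sin ((R:ℂ) * ((x:ℂ) - a)) * g x) * Complex.I_sq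
    have hintneg : Integrable (fun x : ℝ => cexp ((-(R*x) : ℝ) * I) * g x) := by
      simpa [neg_mul] using hint (-R)
    simp_rw [hx]
    rw [integral_div, integral_mul_const,
      integral_sub (hintneg.const_mul _) ((hint R).const_mul _),
      integral_const_mul, integral_const_mul, e1, e2]
  have hb : ∀ R : ℝ, ‖∫ x : ℝ, (Real.sin (R * (x - a)) : ℂ) * g x‖
      ≤ (‖𝓕 g (R / (2*π))‖ + ‖𝓕 g (-(R / (2*π)))‖) / 2 := by
    intro R
    rw [key R, norm_div, norm_mul, Complex.norm_I, mul_one]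
    have : ‖cexp ((R*a : ℝ) * I) * 𝓕 g (R / (2*π))
         - cexp ((-(R*a) : ℝ) * I) * 𝓕 g (-(R / (2*π)))‖
        ≤ ‖𝓕 g (R / (2*π))‖ + ‖𝓕 g (-(R / (2*π)))‖ := by
      refine (norm_sub_le _ _).trans (le_of_eq ?_)
      rw [norm_mul, norm_mul]
      simp [Complex.norm_exp]
    simp at this ⊢
    linarith
  have hF := Real.zero_at_infty_fourier g
  have hco1 : Tendsto (fun R : ℝ => R / (2 * π)) atTop (cocompact ℝ) :=
    (tendsto_id.atTop_div_const h2pi).mono_right _root_.atTop_le_cocompact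
  have hco2 : Tendsto (fun R : ℝ => -(R / (2 * π))) atTop (cocompact ℝ) :=
    (tendsto_neg_atTop_atBot.comp (tendsto_id.atTop_div_const h2pi)).mono_right _root_.atBot_le_cocompact
  have t1 : Tendsto (fun R : ℝ => ‖𝓕 g (R / (2*π))‖) atTop (nhds 0) :=
    tendsto_norm_zero.comp (hF.comp hco1)
  have t2 : Tendsto (fun R : ℝ => ‖𝓕 g (-(R / (2*π)))‖) atTop (nhds 0) :=
    tendsto_norm_zero.comp (hF.comp hco2)
  refine squeeze_zero_norm hb ?_
  simpa using (t1.add t2).div_const 2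


lemma kernel_int (R t : ℝ) (ht : t ≠ 0) :
    (∫ ξ in (-(R/(2*π)))..(R/(2*π)), cexp ((2*π*ξ*t : ℝ) * I))
      = ((Real.sin (R*t) / (π * t) : ℝ) : ℂ) := by
  have hc : ((2*π*t : ℝ) * I : ℂ) ≠ 0 := by
    simp [Complex.ext_iff, Real.pi_ne_zero, ht]
  have hrw : ∀ ξ : ℝ, cexp ((2*π*ξ*t : ℝ) * I) = cexp (((2*π*t : ℝ) * I) * ξ) := by
    intro ξ; congr 1; push_cast; ring
  rw [intervalIntegral.integral_congr (fun ξ _ => hrw ξ), integral_exp_mul_complex hc]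
  have hπ : (π : ℂ) ≠ 0 := by exact_mod_cast Real.pi_ne_zero
  have htc : (t : ℂ) ≠ 0 := by exact_mod_cast ht
  have hA : ((2*π*t : ℝ) * I : ℂ) * ((R/(2*π) : ℝ) : ℂ) = ((R*t : ℝ) : ℂ) * I := by
    push_cast
    field_simp
  have hB : ((2*π*t : ℝ) * I : ℂ) * ((-(R/(2*π)) : ℝ) : ℂ) = ((-(R*t) : ℝ) : ℂ) * I := by
    push_cast
    field_simp
  rw [hA, hB, Complex.exp_mul_I, Complex.exp_mul_I]
  push_cast
  rw [Complex.sin_neg, Complex.cos_neg]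
  have hπt : ((π : ℂ) * t) ≠ 0 := by
    simp [Complex.ext_iff, Real.pi_ne_zero, ht]
  field_simp
  ring_nf

lemma gauss_swap (ψ : ℝ → ℂ) (hψc : Continuous ψ) (hψ : Integrable ψ) (a R : ℝ)
    (hR : 0 ≤ R) :
    (∫ x : ℝ, ((Real.sin (R*(x-a)) / (x - a) : ℝ) : ℂ) * ψ x)
      = π * ∫ ξ in (-(R/(2*π)))..(R/(2*π)), cexp ((2*π*ξ*a : ℝ) * I) * 𝓕 ψ ξ := by
  have h2pi : (0:ℝ) < 2 * π := by positivity
  set W := R / (2*π) with hW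
  have hWW : -W ≤ W := by
    have : 0 ≤ W := div_nonneg hR h2pi.le
    linarith
  have hane : ∀ᵐ x : ℝ, x ≠ a := by
    simp [ae_iff, not_not, Set.setOf_eq_eq_singleton, measure_singleton]
  set f : ℝ → ℂ := fun ξ => cexp ((2*π*ξ*a : ℝ) * I) * 𝓕 ψ ξ with hf
  have hae : (fun x : ℝ => ((Real.sin (R*(x-a)) / (x - a) : ℝ) : ℂ) * ψ x)
      =ᵐ[volume] fun x : ℝ => (π : ℂ) * ∫ ξ in (-W)..W, cexp ((2*π*ξ*(x-a) : ℝ) * I) * ψ x := by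
    filter_upwards [hane] with x hx
    rw [intervalIntegral.integral_mul_const, kernel_int R (x - a) (sub_ne_zero.2 hx)]
    have hπ : (π : ℝ) ≠ 0 := Real.pi_ne_zero
    push_cast
    have hπc : (π : ℂ) ≠ 0 := by exact_mod_cast hπ
    have hxa : (x:ℂ) - a ≠ 0 := sub_ne_zero.2 (by exact_mod_cast hx)
    field_simp
  rw [integral_congr_ae hae, integral_const_mul]
  congr 1
  have hswap : (∫ x : ℝ, ∫ ξ in Set.Ioc (-W) W, cexp ((2*π*ξ*(x-a) : ℝ) * I) * ψ x)
      = ∫ ξ in Set.Ioc (-W) W, ∫ x : ℝ, cexp ((2*π*ξ*(x-a) : ℝ) * I) * ψ x := by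
    apply integral_integral_swap
    have hone : IntegrableOn (fun _ : ℝ => (1:ℂ)) (Set.Ioc (-W) W) volume :=
      integrableOn_const measure_Ioc_lt_top.ne
    have hbase : Integrable (fun p : ℝ × ℝ => ψ p.1 * (1:ℂ))
        (volume.prod (volume.restrict (Set.Ioc (-W) W))) := hψ.mul_prod hone
    have hbase' : Integrable (fun p : ℝ × ℝ => ψ p.1)
        (volume.prod (volume.restrict (Set.Ioc (-W) W))) := by
      simpa using hbase
    refine hbase'.bdd_mul ?_ (c := 1) (ae_of_all _ fun p => by simp [Complex.norm_exp])
    exact (Complex.continuous_exp.comp (by continuity)).aestronglyMeasurable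
  have hinner : ∀ ξ : ℝ, (∫ x : ℝ, cexp ((2*π*ξ*(x-a) : ℝ) * I) * ψ x) = f (-ξ) := by
    intro ξ
    rw [hf]
    simp only
    rw [Real.fourier_real_eq_integral_exp_smul, ← integral_const_mul]
    congr 1; ext x
    rw [smul_eq_mul, ← mul_assoc, ← Complex.exp_add]
    congr 2
    push_cast
    ring
  calc (∫ x : ℝ, ∫ ξ in (-W)..W, cexp ((2*π*ξ*(x-a) : ℝ) * I) * ψ x)
      = ∫ x : ℝ, ∫ ξ in Set.Ioc (-W) W, cexp ((2*π*ξ*(x-a) : ℝ) * I) * ψ x := by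
        congr 1; ext x; rw [intervalIntegral.integral_of_le hWW]
    _ = ∫ ξ in Set.Ioc (-W) W, ∫ x : ℝ, cexp ((2*π*ξ*(x-a) : ℝ) * I) * ψ x := hswap
    _ = ∫ ξ in Set.Ioc (-W) W, f (-ξ) := by
        refine setIntegral_congr_fun measurableSet_Ioc fun ξ _ => hinner ξ
    _ = ∫ ξ in (-W)..W, f (-ξ) := (intervalIntegral.integral_of_le hWW).symm
    _ = ∫ ξ in (-W)..W, f ξ := by
        rw [intervalIntegral.integral_comp_neg]
        simp

set_option maxHeartbeats 1000000 in
lemma gauss_main (a : ℝ) (Cc : ℂ) :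
    Tendsto (fun R : ℝ => ∫ x : ℝ, ((Real.sin (R*(x-a)) / (x - a) : ℝ) : ℂ)
        * (Cc * cexp (-(π:ℂ) * (x:ℂ)^2))) atTop
      (nhds ((π:ℂ) * (Cc * cexp (-(π:ℂ) * (a:ℂ)^2)))) := by
  have h2pi : (0:ℝ) < 2 * π := by positivity
  set ψ : ℝ → ℂ := fun x : ℝ => Cc * cexp (-(π:ℂ) * (x:ℂ)^2) with hψdef
  have hψc : Continuous ψ := by fun_prop
  have hψ : Integrable ψ := by
    refine (((integrable_exp_neg_mul_sq Real.pi_pos).ofReal).const_mul Cc).congr ?_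
    filter_upwards with x
    simp only [hψdef]
    congr 1
    norm_cast
  have hgauss := fourier_gaussian_pi (b := (1:ℂ)) (by norm_num)
  simp only [mul_one, one_mul, one_cpow, ne_eq, one_ne_zero, not_false_eq_true, div_one,
    div_self] at hgauss
  have hfour : 𝓕 ψ = ψ := by
    ext ξ
    rw [hψdef]
    simp only
    rw [Real.fourier_real_eq_integral_exp_smul]
    calc (∫ v : ℝ, cexp ((-2*π*v*ξ : ℝ) * I) • (Cc * cexp (-(π:ℂ)*(v:ℂ)^2)))
        = Cc * ∫ v : ℝ, cexp ((-2*π*v*ξ : ℝ) * I) • cexp (-(π:ℂ)*(v:ℂ)^2) := by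
          rw [← integral_const_mul]; congr 1; ext v
          rw [smul_eq_mul, smul_eq_mul]; ring
      _ = Cc * 𝓕 (fun v : ℝ => cexp (-(π:ℂ)*(v:ℂ)^2)) ξ := by
          rw [Real.fourier_real_eq_integral_exp_smul]
      _ = Cc * cexp (-(π:ℂ)*(ξ:ℂ)^2) := by
          rw [show (fun v : ℝ => cexp (-(π:ℂ)*(v:ℂ)^2))
              = fun v : ℝ => cexp (-(π:ℂ)*((v:ℂ))^2) from rfl, hgauss]
  have h𝓕int : Integrable (𝓕 ψ) := by rw [hfour]; exact hψ
  set G : ℝ → ℂ := fun ξ => cexp ((2*π*ξ*a : ℝ) * I) * 𝓕 ψ ξ with hG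
  have hGint : Integrable G :=
    h𝓕int.bdd_mul (Complex.continuous_exp.comp (by continuity)).aestronglyMeasurable
      (c := 1) (ae_of_all _ fun ξ => by simp [Complex.norm_exp])
  have hgauss2 := fourier_gaussian_pi' (b := (1:ℂ)) (by norm_num) (I * a)
  have h0 := congrFun hgauss2 0
  rw [Real.fourier_real_eq_integral_exp_smul] at h0
  simp only [mul_zero, zero_mul, neg_zero, Complex.ofReal_zero, Complex.exp_zero, one_smul,
    one_cpow, div_one, zero_add, mul_one, one_div, inv_one, one_mul] at h0
  have hinv : (∫ ξ : ℝ, G ξ) = ψ a := by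
    have hGeq : ∀ ξ : ℝ, G ξ = Cc * cexp (-(π:ℂ) * (ξ:ℂ)^2 + 2*π*(I*a)*ξ) := by
      intro ξ
      rw [hG, hfour]
      simp only [hψdef]
      calc cexp ((2*π*ξ*a : ℝ) * I) * (Cc * cexp (-(π:ℂ)*(ξ:ℂ)^2))
          = Cc * (cexp ((2*π*ξ*a : ℝ) * I) * cexp (-(π:ℂ)*(ξ:ℂ)^2)) := by ring
        _ = Cc * cexp (-(π:ℂ) * (ξ:ℂ)^2 + 2*π*(I*a)*ξ) := by
            rw [← Complex.exp_add]
            congr 1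
            push_cast
            ring
    rw [show (∫ ξ : ℝ, G ξ) = ∫ ξ : ℝ, Cc * cexp (-(π:ℂ) * (ξ:ℂ)^2 + 2*π*(I*a)*ξ) from
        integral_congr_ae (Filter.Eventually.of_forall hGeq), integral_const_mul, h0, hψdef]
    simp only
    congr 1
    rw [← mul_assoc, Complex.I_mul_I]
    ring
  have hlim : Tendsto (fun R : ℝ => ∫ ξ in (-(R/(2*π)))..(R/(2*π)), G ξ) atTop (nhds (ψ a)) := by
    rw [← hinv]
    exact intervalIntegral_tendsto_integral hGint
      (tendsto_neg_atTop_atBot.comp (tendsto_id.atTop_div_const h2pi))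
      (tendsto_id.atTop_div_const h2pi)
  refine Tendsto.congr' ?_ (hlim.const_mul (π:ℂ))
  filter_upwards [eventually_ge_atTop (0:ℝ)] with R hR
  exact (gauss_swap ψ hψc hψ a R hR).symm

set_option maxHeartbeats 1000000 in
/-- Dirichlet-kernel delta-sequence property for compactly supported C¹ functions. -/
theorem dirichlet_kernel_delta
    (φ : ℝ → ℝ) (hφ : ContDiff ℝ 1 φ) (hsupp : HasCompactSupport φ) (a : ℝ) :
    Tendsto (fun R : ℝ =>
        ∫ x : ℝ, (1 / π) * (Real.sin (R * (x - a)) / (x - a)) * φ x)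
      atTop (nhds (φ a)) := by
  set Φ : ℝ → ℂ := fun x => (φ x : ℂ) with hΦdef
  have hΦ : ContDiff ℝ 1 Φ := Complex.ofRealCLM.contDiff.comp hφ
  have hΦint : Integrable Φ :=
    ((hφ.continuous.integrable_of_hasCompactSupport hsupp)).ofReal
  set Cc : ℂ := (φ a : ℂ) * cexp ((π:ℂ) * (a:ℂ)^2) with hCc
  set ψ : ℝ → ℂ := fun x : ℝ => Cc * cexp (-(π:ℂ) * (x:ℂ)^2) with hψdef
  have hψa : ψ a = (φ a : ℂ) := by
    rw [hψdef]
    simp only [hCc]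
    rw [mul_assoc, ← Complex.exp_add]
    norm_num
  have hψsm : ContDiff ℝ 1 ψ :=
    contDiff_const.mul
      ((contDiff_const.mul ((Complex.ofRealCLM.contDiff.comp contDiff_id).pow 2)).cexp)
  have hψint : Integrable ψ := by
    refine (((integrable_exp_neg_mul_sq Real.pi_pos).ofReal).const_mul Cc).congr ?_
    filter_upwards with x
    simp only [hψdef]
    congr 1
    norm_cast
  set h : ℝ → ℂ := fun x => Φ x - ψ x with hhdef
  have hh : ContDiff ℝ 1 h := hΦ.sub hψsm
  have hha : h a = 0 := by rw [hhdef]; simp only [hψa, hΦdef, sub_self]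
  have hhi : Integrable h := hΦint.sub hψint
  set g : ℝ → ℂ := fun x => h x / ((x : ℂ) - (a : ℂ)) with hgdef
  have hgm : AEStronglyMeasurable g := by
    apply Measurable.aestronglyMeasurable
    exact hh.continuous.measurable.div
      ((Complex.measurable_ofReal.comp measurable_id).sub_const _)
  -- bound near a
  obtain ⟨D, hD⟩ := (isCompact_Icc (a := a-1) (b := a+1)).exists_bound_of_continuousOn
    ((hh.continuous_deriv le_rfl).continuousOn)
  have hamem : a ∈ Set.Icc (a-1) (a+1) := by constructor <;> linarith
  have hD0 : 0 ≤ D := le_trans (norm_nonneg _) (hD a hamem)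
  have hnear : ∀ x ∈ Set.Icc (a-1) (a+1), ‖g x‖ ≤ D := by
    intro x hx
    rcases eq_or_ne x a with rfl | hxa
    · simp [hgdef, hha, hD0]
    · have hlip : ‖h x - h a‖ ≤ D * ‖x - a‖ :=
        Convex.norm_image_sub_le_of_norm_deriv_le
          (fun y _ => (hh.differentiable one_ne_zero) y)
          hD (convex_Icc _ _) hamem hx
      rw [hha, sub_zero] at hlip
      have hne : ((x : ℂ) - (a : ℂ)) ≠ 0 := by
        rw [← Complex.ofReal_sub]
        exact_mod_cast sub_ne_zero.2 hxa
      rw [hgdef]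
      simp only
      rw [norm_div, div_le_iff₀ (norm_pos_iff.mpr hne)]
      calc ‖h x‖ ≤ D * ‖x - a‖ := hlip
        _ = D * ‖(x : ℂ) - (a : ℂ)‖ := by
            rw [← Complex.ofReal_sub, Complex.norm_real]
  have hgi : Integrable g := by
    have h1 : IntegrableOn g (Set.Icc (a-1) (a+1)) :=
      Measure.integrableOn_of_bounded measure_Icc_lt_top.ne hgm
        ((ae_restrict_iff' measurableSet_Icc).2 (ae_of_all _ hnear))
    have h2 : IntegrableOn g (Set.Icc (a-1) (a+1))ᶜ := by
      refine (hhi.norm.integrableOn).mono' (hgm.restrict)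
        ((ae_restrict_iff' measurableSet_Icc.compl).2 (ae_of_all _ ?_))
      intro x hx
      have hx' : ¬ (a - 1 ≤ x ∧ x ≤ a + 1) := by
        simpa [Set.mem_Icc, Set.mem_compl_iff] using hx
      have hfar : 1 ≤ |x - a| := by
        rcases not_and_or.1 hx' with h' | h'
        · rw [abs_sub_comm, le_abs]; left; linarith [lt_of_not_ge h']
        · rw [le_abs]; left; linarith [lt_of_not_ge h']
      rw [hgdef]
      simp only
      rw [norm_div, ← Complex.ofReal_sub, Complex.norm_real, Real.norm_eq_abs]
      exact div_le_self (norm_nonneg _) hfar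
    have := h1.union h2
    rwa [Set.union_compl_self, integrableOn_univ] at this
  -- kernel bound and measurability
  have hkb : ∀ (R t : ℝ), |Real.sin (R * t) / t| ≤ |R| := by
    intro R t
    rcases eq_or_ne t 0 with rfl | ht
    · simp
    · rw [abs_div, div_le_iff₀ (abs_pos.2 ht)]
      calc |Real.sin (R * t)| ≤ |R * t| := Real.abs_sin_le_abs
        _ = |R| * |t| := abs_mul _ _
  have hkm : ∀ R : ℝ, Measurable fun x : ℝ => ((Real.sin (R * (x-a)) / (x-a) : ℝ) : ℂ) := by
    intro R
    apply Complex.measurable_ofReal.comp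
    exact ((Real.continuous_sin.comp (continuous_const.mul (continuous_id.sub continuous_const))).measurable).div
      (measurable_id.sub_const a)
  have hker_mul_int : ∀ (R : ℝ) (F : ℝ → ℂ), Integrable F →
      Integrable (fun x : ℝ => ((Real.sin (R * (x-a)) / (x-a) : ℝ) : ℂ) * F x) := by
    intro R F hF
    refine hF.bdd_mul (hkm R).aestronglyMeasurable (c := |R|) (ae_of_all _ fun x => ?_)
    rw [Complex.norm_real, Real.norm_eq_abs]
    exact hkb R (x - a)
  -- split
  set Kc : ℝ → ℂ := fun R => ∫ x : ℝ, ((Real.sin (R * (x-a)) / (x-a) : ℝ) : ℂ) * Φ x with hKc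
  have hsplit : ∀ R : ℝ, Kc R
      = (∫ x : ℝ, ((Real.sin (R * (x-a)) / (x-a) : ℝ) : ℂ) * ψ x)
        + ∫ x : ℝ, ((Real.sin (R * (x-a)) / (x-a) : ℝ) : ℂ) * h x := by
    intro R
    rw [hKc, ← integral_add (hker_mul_int R ψ hψint) (hker_mul_int R h hhi)]
    refine integral_congr_ae (Filter.Eventually.of_forall fun x => ?_)
    rw [hhdef]
    ring
  have hB : Tendsto (fun R : ℝ => ∫ x : ℝ, ((Real.sin (R * (x-a)) / (x-a) : ℝ) : ℂ) * h x)
      atTop (nhds 0) := by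
    refine (rl_sin g hgi a).congr fun R => ?_
    refine integral_congr_ae (Filter.Eventually.of_forall fun x => ?_)
    rw [hgdef]
    simp only
    push_cast
    ring
  have hA : Tendsto (fun R : ℝ => ∫ x : ℝ, ((Real.sin (R * (x-a)) / (x-a) : ℝ) : ℂ) * ψ x)
      atTop (nhds ((π : ℂ) * (φ a : ℂ))) := by
    have := gauss_main a Cc
    rw [show ((π:ℂ) * (Cc * cexp (-(π:ℂ) * (a:ℂ)^2))) = (π : ℂ) * (φ a : ℂ) by
      rw [hCc, mul_assoc, ← Complex.exp_add]; norm_num] at this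
    exact this
  have hKctend : Tendsto Kc atTop (nhds ((π : ℂ) * (φ a : ℂ))) := by
    have := hA.add hB
    rw [add_zero] at this
    exact this.congr fun R => (hsplit R).symm
  -- back to the real statement
  have hIR : ∀ R : ℝ, ((∫ x : ℝ, (1 / π) * (Real.sin (R * (x - a)) / (x - a)) * φ x : ℝ) : ℂ)
      = (1/π : ℂ) * Kc R := by
    intro R
    rw [hKc, ← integral_const_mul]
    have hcast : ((∫ x : ℝ, (1 / π) * (Real.sin (R * (x - a)) / (x - a)) * φ x : ℝ) : ℂ)
        = ∫ x : ℝ, (((1 / π) * (Real.sin (R * (x - a)) / (x - a)) * φ x : ℝ) : ℂ) := by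
      exact
        (integral_ofReal (f := fun x : ℝ => (1 / π) * (Real.sin (R * (x - a)) / (x - a)) * φ x)
          (𝕜 := ℂ)).symm
    rw [hcast]
    refine integral_congr_ae (Filter.Eventually.of_forall fun x => ?_)
    push_cast
    ring
  have hfin : Tendsto (fun R : ℝ => ((1/π : ℂ) * Kc R).re) atTop
      (nhds (((1/π : ℂ) * ((π : ℂ) * (φ a : ℂ))).re)) :=
    (Complex.continuous_re.tendsto _).comp (hKctend.const_mul _)
  have hval : (((1/π : ℂ) * ((π : ℂ) * (φ a : ℂ))).re) = φ a := by
    rw [← mul_assoc, one_div, inv_mul_cancel₀ (by exact_mod_cast Real.pi_ne_zero), one_mul,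
      Complex.ofReal_re]
  rw [hval] at hfin
  refine hfin.congr fun R => ?_
  rw [← hIR R, Complex.ofReal_re]
end

section
/- Let U(a,z) be the parabolic cylinder function defined for Re a > -1/2 by U(a,z) = (e^{-z²/4}/Γ(1/2 + a)) ∫_0^∞ e^{-zs - s²/2} s^{a - 1/2} ds. Then for all real a and x > 0, |U(ia, x e^{-iπ/4})| ≤ 2^{1/4} √π / (|Γ(1/2 + ia)| · x^{1/2}). -/
open MeasureTheory Real Complex
open Set

/-- Weber's parabolic cylinder function U(a,z), via its integral
representation (valid for Re a > -1/2). -/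
noncomputable def paraCylU (a z : ℂ) : ℂ :=
  Complex.exp (-z ^ 2 / 4) / Complex.Gamma (1/2 + a) *
    ∫ s in Set.Ioi (0 : ℝ), Complex.exp (-z * s - s ^ 2 / 2) * (s : ℂ) ^ (a - 1/2)

/-- The bound |U(ia, x e^{-iπ/4})| ≤ 2^{1/4} √π / (|Γ(1/2+ia)| x^{1/2}). -/
theorem paraCylU_bound (a : ℝ) (x : ℝ) (hx : 0 < x) :
    ‖paraCylU (Complex.I * a) (x * Complex.exp (-Complex.I * π / 4))‖ ≤
      (2 : ℝ) ^ ((1:ℝ)/4) * Real.sqrt π /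
        (‖Complex.Gamma (1/2 + Complex.I * a)‖ * Real.sqrt x) := by
  set E : ℂ := Complex.exp (-Complex.I * π / 4) with hE
  have hEeq : E = Complex.exp (((-(π/4) : ℝ) : ℂ) * Complex.I) := by
    rw [hE]; congr 1; push_cast; ring
  have hre : E.re = Real.sqrt 2 / 2 := by
    rw [hEeq, Complex.exp_ofReal_mul_I_re, Real.cos_neg, Real.cos_pi_div_four]
  have hsq : E ^ 2 = -Complex.I := by
    rw [hEeq, sq, ← Complex.exp_add]
    have : (((-(π/4) : ℝ) : ℂ) * Complex.I) + (((-(π/4) : ℝ) : ℂ) * Complex.I)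
        = ((-(π/2) : ℝ) : ℂ) * Complex.I := by push_cast; ring
    rw [this, Complex.exp_mul_I]
    push_cast
    simp [Complex.cos_neg, Complex.sin_neg, Complex.cos_pi_div_two, Complex.sin_pi_div_two]
  set z : ℂ := (x : ℂ) * E with hz
  have hzre : z.re = x * (Real.sqrt 2 / 2) := by
    rw [hz, Complex.re_ofReal_mul, hre]
  set c : ℝ := x * (Real.sqrt 2 / 2) with hc
  have hcpos : 0 < c := by
    have h2 : (0:ℝ) < Real.sqrt 2 / 2 := by positivity
    positivity
  -- |exp(-z^2/4)| = 1
  have habs_exp : ‖Complex.exp (-z ^ 2 / 4)‖ = 1 := by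
    have : z ^ 2 = -Complex.I * (x:ℂ)^2 := by rw [hz, mul_pow, hsq]; ring
    rw [Complex.norm_exp, this]
    norm_num [Complex.div_re, Complex.normSq, ← Complex.ofReal_pow]
  -- pointwise norm of the integrand
  have hnorm : ∀ s ∈ Ioi (0:ℝ),
      ‖Complex.exp (-z * s - (s:ℂ) ^ 2 / 2) * (s : ℂ) ^ (Complex.I * a - 1/2)‖
        = Real.exp (-(c * s) - s^2/2) * s ^ (-(1/2) : ℝ) := by
    intro s hs
    rw [norm_mul, Complex.norm_exp,
      Complex.norm_cpow_eq_rpow_re_of_pos hs]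
    congr 2
    · simp [Complex.sub_re, Complex.div_re, Complex.mul_re, Complex.ofReal_re,
        Complex.ofReal_im, hzre, ← Complex.ofReal_pow]
    · norm_num [Complex.sub_re, Complex.mul_re, Complex.div_re]
  -- the dominating function
  set g : ℝ → ℝ := fun s => s ^ (-(1/2) : ℝ) * Real.exp (-(c * s)) with hg
  have hgint : IntegrableOn g (Ioi (0:ℝ)) := by
    have := integrableOn_rpow_mul_exp_neg_mul_rpow
      (by norm_num : (-1:ℝ) < -(1/2)) (by norm_num : (0:ℝ) < 1) hcpos
    refine this.congr_fun (fun s hs => ?_) measurableSet_Ioi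
    simp only [Real.rpow_one, hg]; ring_nf
  have hbound : ‖∫ s in Ioi (0:ℝ),
      Complex.exp (-z * s - (s:ℂ) ^ 2 / 2) * (s : ℂ) ^ (Complex.I * a - 1/2)‖
        ≤ ∫ s in Ioi (0:ℝ), g s := by
    refine norm_integral_le_of_norm_le hgint ?_
    filter_upwards [ae_restrict_mem measurableSet_Ioi] with s hs
    rw [hnorm s hs, hg]
    have h1 : Real.exp (-(c * s) - s^2/2) ≤ Real.exp (-(c * s)) := by
      apply Real.exp_le_exp.2; nlinarith [sq_nonneg s]
    have h2 : (0:ℝ) ≤ s ^ (-(1/2) : ℝ) := Real.rpow_nonneg (le_of_lt hs) _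
    calc Real.exp (-(c * s) - s^2/2) * s ^ (-(1/2) : ℝ)
        ≤ Real.exp (-(c * s)) * s ^ (-(1/2) : ℝ) := by
          exact mul_le_mul_of_nonneg_right h1 h2
      _ = s ^ (-(1/2) : ℝ) * Real.exp (-(c * s)) := by ring
  have hval : ∫ s in Ioi (0:ℝ), g s = (1/c) ^ ((1:ℝ)/2) * Real.Gamma (1/2) := by
    rw [hg]
    have := Real.integral_rpow_mul_exp_neg_mul_Ioi (by norm_num : (0:ℝ) < 1/2) hcpos
    rw [← this]
    refine setIntegral_congr_fun measurableSet_Ioi (fun s hs => ?_)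
    norm_num
  have hval2 : (1/c) ^ ((1:ℝ)/2) * Real.Gamma (1/2)
      = (2:ℝ) ^ ((1:ℝ)/4) * Real.sqrt π / Real.sqrt x := by
    rw [Real.Gamma_one_half_eq]
    have h2 : Real.sqrt 2 = (2:ℝ) ^ ((1:ℝ)/2) := by
      rw [Real.sqrt_eq_rpow]
    have hc' : (1/c) = (2:ℝ) ^ ((1:ℝ)/2) / x := by
      rw [hc, h2]
      rw [div_eq_div_iff (by positivity) hx.ne']
      have h22 : (2:ℝ)^((1:ℝ)/2) * (2:ℝ)^((1:ℝ)/2) = 2 := by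
        rw [← Real.rpow_add (by norm_num)]; norm_num
      nlinarith [h22]
    rw [hc', Real.div_rpow (by positivity) hx.le,
      ← Real.rpow_mul (by norm_num : (0:ℝ) ≤ 2)]
    rw [show ((1:ℝ)/2) * ((1:ℝ)/2) = (1:ℝ)/4 by norm_num]
    rw [Real.sqrt_eq_rpow x]
    ring
  -- put it together
  have hΓ : Complex.Gamma (1/2 + Complex.I * a) ≠ 0 := by
    apply Complex.Gamma_ne_zero_of_re_pos
    simp [Complex.add_re, Complex.mul_re]
  have hΓpos : 0 < ‖Complex.Gamma (1/2 + Complex.I * a)‖ :=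
    norm_pos_iff.mpr hΓ
  rw [paraCylU, norm_mul, norm_div, habs_exp]
  rw [div_mul_eq_mul_div, one_mul]
  rw [show (2:ℝ) ^ ((1:ℝ)/4) * Real.sqrt π /
      (‖Complex.Gamma (1/2 + Complex.I * a)‖ * Real.sqrt x)
      = ((2:ℝ) ^ ((1:ℝ)/4) * Real.sqrt π / Real.sqrt x) /
        ‖Complex.Gamma (1/2 + Complex.I * a)‖ by
    field_simp]
  gcongr
  calc ‖∫ s in Ioi (0:ℝ),
        Complex.exp (-z * s - (s:ℂ) ^ 2 / 2) * (s : ℂ) ^ (Complex.I * a - 1/2)‖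
      = ‖∫ s in Ioi (0:ℝ),
        Complex.exp (-z * s - (s:ℂ) ^ 2 / 2) * (s : ℂ) ^ (Complex.I * a - 1/2)‖ := rfl
    _ ≤ ∫ s in Ioi (0:ℝ), g s := hbound
    _ = (2:ℝ) ^ ((1:ℝ)/4) * Real.sqrt π / Real.sqrt x := by rw [hval, hval2]
end
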